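/- arXiv:1911.12108 — 4 statements merged into one kernel-verified Lean document; each statement's English description precedes it below -/
import Mathlib

section
/- Every finite weak antichain A in ℤ^n is layer-decomposable: A = A_1 ∪ A_2 ∪ … ∪ A_n, where the sets A_i are defined inductively by A_1 = B_1(A) and A_i = B_i(A \ (A_1 ∪ … ∪ A_{i−1})). -/
namespace ProjWA

variable {ι : Type*}

/-- `A ⊆ ℤ^ι` is a weak antichain if it contains no `x, y` with `x i < y i` for every `i`. -/
def IsWeakAntichain [Fintype ι] (A : Finset (ι → ℤ)) : Prop :=
  ∀ x ∈ A, ∀ y ∈ A, ¬ ∀ i, x i < y i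

/-- The projection deleting the coordinate `i`. -/
def projFun [DecidableEq ι] (i : ι) (x : ι → ℤ) : {j : ι // j ≠ i} → ℤ :=
  fun j => x j.1

/-- The image of a finite set under the projection deleting coordinate `i`. -/
def proj [Fintype ι] [DecidableEq ι] (i : ι) (A : Finset (ι → ℤ)) :
    Finset ({j : ι // j ≠ i} → ℤ) :=
  A.image (projFun i)

/-- `gap A = Σ_i |π_i(A)| - |A|`. -/
def gap [Fintype ι] [DecidableEq ι] (A : Finset (ι → ℤ)) : ℤ :=
  (∑ i : ι, ((proj i A).card : ℤ)) - A.card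

/-- `X_n`: the set of points of `ℤ_{≥0}^ι` having at least one coordinate equal to zero. -/
def XSet (ι : Type*) : Set (ι → ℤ) :=
  {x | (∀ i, 0 ≤ x i) ∧ ∃ i, x i = 0}

/-- A down-set in `ℤ_{≥0}^ι`. -/
def IsDownSet (A : Finset (ι → ℤ)) : Prop :=
  ∀ x y : ι → ℤ, (∀ i, 0 ≤ x i) → (∀ i, x i ≤ y i) → y ∈ A → x ∈ A

/-- The `i`-th bottom layer `B_i(A)`. -/
def bottomLayer [Fintype ι] [DecidableEq ι] (i : ι) (A : Finset (ι → ℤ)) : Finset (ι → ℤ) :=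
  A.filter fun x => ∀ y ∈ A, (∀ j, j ≠ i → y j = x j) → x i ≤ y i

/-- The `i`-compression `C_i(A)`: each `x ∈ B_i(A)` is replaced by the point obtained
by setting its `i`-th coordinate to `0`. -/
def compress [Fintype ι] [DecidableEq ι] (i : ι) (A : Finset (ι → ℤ)) : Finset (ι → ℤ) :=
  (A \ bottomLayer i A) ∪ (bottomLayer i A).image fun x => Function.update x i 0

/-- `layersRest A k = A \ (A_1 ∪ ⋯ ∪ A_k)` where `A_i` are the layers of `A`. -/
def layersRest {n : ℕ} (A : Finset (Fin n → ℤ)) : ℕ → Finset (Fin n → ℤ)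
  | 0 => A
  | k + 1 =>
      layersRest A k \ (if h : k < n then bottomLayer ⟨k, h⟩ (layersRest A k) else ∅)

/-- The layers `A_1, …, A_n` of `A`, defined by `A_i = B_i(A \ (A_1 ∪ ⋯ ∪ A_{i-1}))`. -/
def layer {n : ℕ} (A : Finset (Fin n → ℤ)) (i : Fin n) : Finset (Fin n → ℤ) :=
  bottomLayer i (layersRest A i.1)

/-- `compressUpTo A k = C_k(C_{k-1}(⋯(C_1(A))⋯))`. -/
def compressUpTo {n : ℕ} (A : Finset (Fin n → ℤ)) : ℕ → Finset (Fin n → ℤ)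
  | 0 => A
  | k + 1 =>
      if h : k < n then compress ⟨k, h⟩ (compressUpTo A k) else compressUpTo A k

/-- The complete `i`-compression `𝒞_i(A)`: every line in direction `i` is replaced
by an initial segment of the same size. -/
def ccompress [Fintype ι] [DecidableEq ι] (i : ι) (A : Finset (ι → ℤ)) : Finset (ι → ℤ) :=
  A.biUnion fun x =>
    (Finset.range ((A.filter fun y => ∀ j, j ≠ i → y j = x j).card)).image fun a : ℕ =>
      Function.update x i (a : ℤ)

/-- The set `T = {i : x i ≠ y i}` of coordinates where `x` and `y` differ. -/
def diffSet [Fintype ι] (x y : ι → ℤ) : Finset ι :=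
  Finset.univ.filter fun i => x i ≠ y i

/-- The maximum value of `x` on a finite set of coordinates (`⊥` if the set is empty). -/
def maxOn (s : Finset ι) (x : ι → ℤ) : WithBot ℤ :=
  (s.image x).max

/-- The largest coordinate in `s` at which `x` attains its maximum over `s`. -/
def argmaxOn [LinearOrder ι] (s : Finset ι) (x : ι → ℤ) : WithBot ι :=
  (s.filter fun i => (x i : WithBot ℤ) = maxOn s x).max

/-- The balanced order: with `T = {i : x i ≠ y i}`, `x < y` iff the maximum of `x` on `T` is
smaller than that of `y` on `T`, or they are equal and the largest index where `x` attains
this maximum on `T` is smaller than the corresponding index for `y`. -/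
def balancedLT [Fintype ι] [LinearOrder ι] (x y : ι → ℤ) : Prop :=
  x ≠ y ∧
    (maxOn (diffSet x y) x < maxOn (diffSet x y) y ∨
      (maxOn (diffSet x y) x = maxOn (diffSet x y) y ∧
        argmaxOn (diffSet x y) x < argmaxOn (diffSet x y) y))

/-- `I` is an initial segment of the balanced order on `X_ι`. -/
def IsInitSeg [Fintype ι] [LinearOrder ι] (I : Finset (ι → ℤ)) : Prop :=
  ↑I ⊆ XSet ι ∧ ∀ x ∈ I, ∀ y ∈ XSet ι, balancedLT y x → y ∈ I

/-- `S(A) = {x ∈ ℤ_{>0}^ι : replacing any one coordinate of x by 0 gives an element of A}`. -/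
def SSet [DecidableEq ι] (A : Finset (ι → ℤ)) : Set (ι → ℤ) :=
  {x | (∀ k, 0 < x k) ∧ ∀ k, Function.update x k 0 ∈ A}

/-- Insert the value `a` at position `i`. -/
def insertAt [DecidableEq ι] (i : ι) (a : ℤ) (x : {j : ι // j ≠ i} → ℤ) : ι → ℤ :=
  fun j => if h : j = i then a else x ⟨j, h⟩

/-- `L^i_a(A)`: the elements of `X_{n-1}` which, after inserting the value `a` at
position `i`, give elements of `A`. -/
def Lset [Fintype ι] [DecidableEq ι] (i : ι) (a : ℤ) (A : Finset (ι → ℤ)) :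
    Finset ({j : ι // j ≠ i} → ℤ) :=
  (proj i (A.filter fun x => x i = a)).filter fun x' => ∃ j, x' j = 0

/-- `K^i(A)`: the elements of `ℤ_{>0}^{n-1}` which, after inserting a `0` at position `i`,
give elements of `A`. -/
def Kset [Fintype ι] [DecidableEq ι] (i : ι) (A : Finset (ι → ℤ)) :
    Finset ({j : ι // j ≠ i} → ℤ) :=
  (proj i (A.filter fun x => x i = 0)).filter fun x' => ∀ j, 0 < x' j

/-- `K` is an initial segment of `ℤ_{>0}^{n-1}` with respect to the order `≺` defined by
`x ≺ y` iff inserting a `0` at position `i` into `x` gives a smaller element of `X_n`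
(in the balanced order) than inserting a `0` at position `i` into `y`. -/
def IsKInitSeg [Fintype ι] [LinearOrder ι] (i : ι) (K : Finset ({j : ι // j ≠ i} → ℤ)) :
    Prop :=
  (∀ x ∈ K, ∀ j, 0 < x j) ∧
    ∀ x ∈ K, ∀ y : {j : ι // j ≠ i} → ℤ, (∀ j, 0 < y j) →
      balancedLT (insertAt i 0 y) (insertAt i 0 x) → y ∈ K

/-- `A_N = {x ∈ ℤ^n : 0 ≤ x_j ≤ N-1 for all j, and x_i = 0 for some i}`. -/
def ANbox (n N : ℕ) : Finset (Fin n → ℤ) :=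
  (Fintype.piFinset fun _ : Fin n => (Finset.range N).image fun k : ℕ => (k : ℤ)).filter
    fun x => ∃ i, x i = 0

/-- `g(n,m)`: the minimum of `gap A` over weak antichains `A` of size `m` in `ℤ^n`. -/
noncomputable def gMin (n m : ℕ) : ℝ :=
  sInf {r : ℝ | ∃ A : Finset (Fin n → ℤ), IsWeakAntichain A ∧ A.card = m ∧ (gap A : ℝ) = r}


lemma layersRest_subset {n : ℕ} (A : Finset (Fin n → ℤ)) : ∀ k, layersRest A k ⊆ A
  | 0 => le_refl A
  | k + 1 => Finset.sdiff_subset.trans (layersRest_subset A k)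

lemma key_descend {n : ℕ} (A : Finset (Fin n → ℤ)) (x : Fin n → ℤ)
    (hx : x ∈ layersRest A n) :
    ∀ d, d ≤ n → ∃ u ∈ layersRest A (n - d),
      (∀ j : Fin n, (j : ℕ) < n - d → u j = x j) ∧
      (∀ j : Fin n, n - d ≤ (j : ℕ) → u j < x j) := by
  intro d
  induction d with
  | zero =>
    intro _
    exact ⟨x, by simpa using hx, fun j _ => rfl, fun j hj => absurd j.2 (by omega)⟩
  | succ d ih =>
    intro hdn
    obtain ⟨u, hu, heq, hlt⟩ := ih (by omega)
    set k := n - (d + 1) with hk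
    have hkn : k < n := by omega
    have hnd : n - d = k + 1 := by omega
    rw [hnd] at hu heq hlt
    have hu' : u ∈ layersRest A k \ bottomLayer ⟨k, hkn⟩ (layersRest A k) := by
      have : layersRest A (k + 1) =
          layersRest A k \ (if h : k < n then bottomLayer ⟨k, h⟩ (layersRest A k) else ∅) := rfl
      rw [this, dif_pos hkn] at hu
      exact hu
    obtain ⟨huk, hnb⟩ := Finset.mem_sdiff.mp hu'
    have hex : ∃ y ∈ layersRest A k,
        (∀ j, j ≠ (⟨k, hkn⟩ : Fin n) → y j = u j) ∧ y ⟨k, hkn⟩ < u ⟨k, hkn⟩ := by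
      by_contra hcon
      push_neg at hcon
      refine hnb ?_
      simp only [bottomLayer, Finset.mem_filter]
      exact ⟨huk, hcon⟩
    obtain ⟨y, hy, hyeq, hylt⟩ := hex
    refine ⟨y, hy, ?_, ?_⟩
    · intro j hj
      have hjne : j ≠ (⟨k, hkn⟩ : Fin n) := by
        intro h; rw [h] at hj; simp at hj
      rw [hyeq j hjne]
      exact heq j (by omega)
    · intro j hj
      by_cases hjk : j = (⟨k, hkn⟩ : Fin n)
      · rw [hjk]
        calc y ⟨k, hkn⟩ < u ⟨k, hkn⟩ := hylt
          _ = x ⟨k, hkn⟩ := heq _ (by simp)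
      · have hjk' : (j : ℕ) ≠ k := fun h => hjk (Fin.ext h)
        rw [hyeq j hjk]
        exact hlt j (by omega)

/-- Every finite weak antichain `A ⊆ ℤ^n` is layer-decomposable:
`A = A_1 ∪ ⋯ ∪ A_n`. -/
theorem weakAntichain_layerDecomposable (n : ℕ) (A : Finset (Fin n → ℤ))
    (hA : IsWeakAntichain A) :
    A = Finset.univ.biUnion (layer A) := by
  apply Finset.Subset.antisymm
  · intro x hxA
    by_contra hx
    have hall : ∀ k, x ∈ layersRest A k := by
      intro k
      induction k with
      | zero => exact hxA
      | succ k ihk =>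
        show x ∈ layersRest A k \ _
        rw [Finset.mem_sdiff]
        refine ⟨ihk, ?_⟩
        split_ifs with h
        · intro hmem
          exact hx (Finset.mem_biUnion.mpr ⟨⟨k, h⟩, Finset.mem_univ _, hmem⟩)
        · exact Finset.notMem_empty x
    obtain ⟨u, hu, _, hlt⟩ := key_descend A x (hall n) n le_rfl
    simp only [Nat.sub_self] at hu hlt
    exact hA u (layersRest_subset A 0 hu) x hxA fun i => hlt i (Nat.zero_le _)
  · intro x hx
    obtain ⟨i, _, hxi⟩ := Finset.mem_biUnion.mp hx
    simp only [layer, bottomLayer, Finset.mem_filter] at hxi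
    exact layersRest_subset A i.1 hxi.1

end ProjWA
end

section
/- If A ⊆ ℤ_{≥0}^n is a finite weak antichain, then the set A' = C_n(C_{n−1}(⋯(C_1(A))⋯)) obtained by successively applying the compressions C_1, C_2, …, C_n satisfies: (i) |π_i(A')| ≤ |π_i(A)| for each i; (ii) A' is k-compressed for all k; (iii) A' is layer-decomposable, A' = A'_1 ∪ … ∪ A'_n; (iv) A'_k = {x ∈ A' : x_k = 0 but x_l ≠ 0 for all l < k} for all k; (v) A' ⊆ X_n, i.e. every element of A' has some zero coordinate. -/
namespace ProjWA

variable {ι : Type*}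

section Aux

variable [Fintype ι] [DecidableEq ι]

lemma bottomLayer_subset (i : ι) (A : Finset (ι → ℤ)) : bottomLayer i A ⊆ A :=
  Finset.filter_subset _ _

lemma mem_compress {i : ι} {A : Finset (ι → ℤ)} {x : ι → ℤ} :
    x ∈ compress i A ↔ (x ∈ A ∧ x ∉ bottomLayer i A) ∨
      ∃ w ∈ bottomLayer i A, Function.update w i 0 = x := by
  simp [compress, Finset.mem_union, Finset.mem_sdiff, Finset.mem_image]

lemma update_mem_compress {i : ι} {A : Finset (ι → ℤ)} {x : ι → ℤ} (hx : x ∈ A) :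
    Function.update x i 0 ∈ compress i A := by
  obtain ⟨m, hm, hmin⟩ := (A.filter fun y => ∀ l, l ≠ i → y l = x l).exists_min_image
      (fun y => y i) ⟨x, Finset.mem_filter.2 ⟨hx, fun l _ => rfl⟩⟩
  rw [Finset.mem_filter] at hm
  have hmB : m ∈ bottomLayer i A := by
    rw [bottomLayer, Finset.mem_filter]
    refine ⟨hm.1, fun y hy hagree => ?_⟩
    exact hmin y (Finset.mem_filter.2 ⟨hy, fun l hl => (hagree l hl).trans (hm.2 l hl)⟩)
  have hupd : Function.update m i 0 = Function.update x i 0 := by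
    funext l
    rcases eq_or_ne l i with rfl | h
    · simp
    · simp [Function.update_of_ne h, hm.2 l h]
  rw [mem_compress]
  exact Or.inr ⟨m, hmB, hupd⟩

lemma card_compress_le (i : ι) (A : Finset (ι → ℤ)) : (compress i A).card ≤ A.card := by
  calc (compress i A).card
      ≤ (A \ bottomLayer i A).card
        + ((bottomLayer i A).image fun x => Function.update x i 0).card :=
        Finset.card_union_le _ _
    _ ≤ (A \ bottomLayer i A).card + (bottomLayer i A).card :=
        Nat.add_le_add_left Finset.card_image_le _
    _ = A.card := Finset.card_sdiff_add_card_eq_card (bottomLayer_subset i A)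

lemma projFun_update {i j : ι} (h : j ≠ i) (x : ι → ℤ) (v : ℤ) :
    projFun i (Function.update x j v) = Function.update (projFun i x) ⟨j, h⟩ v := by
  funext l
  rcases eq_or_ne l ⟨j, h⟩ with rfl | hl
  · simp [projFun]
  · have hlj : l.1 ≠ j := fun hlj => hl (Subtype.ext hlj)
    simp [projFun, Function.update_of_ne hl, Function.update_of_ne hlj]

lemma exists_of_not_bottomLayer {i : ι} {A : Finset (ι → ℤ)} {x : ι → ℤ}
    (hx : x ∈ A) (hB : x ∉ bottomLayer i A) :
    ∃ y ∈ A, (∀ j, j ≠ i → y j = x j) ∧ y i < x i := by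
  rw [bottomLayer, Finset.mem_filter] at hB
  push_neg at hB
  obtain ⟨y, hy, hagree, hlt⟩ := hB hx
  exact ⟨y, hy, hagree, hlt⟩

lemma proj_compress_self (i : ι) (A : Finset (ι → ℤ)) :
    proj i (compress i A) ⊆ proj i A := by
  intro q hq
  obtain ⟨x, hx, rfl⟩ := Finset.mem_image.1 hq
  rw [mem_compress] at hx
  rcases hx with ⟨hxA, _⟩ | ⟨w, hw, rfl⟩
  · exact Finset.mem_image_of_mem _ hxA
  · have : projFun i (Function.update w i 0) = projFun i w := by
      funext l; simp [projFun, Function.update_of_ne l.2]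
    rw [this]
    exact Finset.mem_image_of_mem _ (bottomLayer_subset i A hw)

lemma proj_compress_subset {i j : ι} (h : j ≠ i) (A : Finset (ι → ℤ)) :
    proj i (compress j A) ⊆ compress (⟨j, h⟩ : {l : ι // l ≠ i}) (proj i A) := by
  intro q hq
  obtain ⟨x, hx, rfl⟩ := Finset.mem_image.1 hq
  rw [mem_compress] at hx
  rcases hx with ⟨hxA, hxB⟩ | ⟨w, hw, rfl⟩
  · rw [mem_compress]
    left
    refine ⟨Finset.mem_image_of_mem _ hxA, fun hB => ?_⟩
    obtain ⟨y, hy, hagree, hlt⟩ := exists_of_not_bottomLayer hxA hxB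
    rw [bottomLayer, Finset.mem_filter] at hB
    have hle := hB.2 (projFun i y) (Finset.mem_image_of_mem _ hy)
      (fun l hl => hagree l.1 (fun hlj => hl (Subtype.ext hlj)))
    simp only [projFun] at hle
    exact absurd hle (not_le.2 hlt)
  · rw [projFun_update h]
    exact update_mem_compress (Finset.mem_image_of_mem _ (bottomLayer_subset j A hw))

lemma proj_compress_card_le (i j : ι) (A : Finset (ι → ℤ)) :
    (proj i (compress j A)).card ≤ (proj i A).card := by
  rcases eq_or_ne j i with rfl | h
  · exact Finset.card_le_card (proj_compress_self j A)
  · exact le_trans (Finset.card_le_card (proj_compress_subset h A)) (card_compress_le _ _)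

lemma nonneg_compress {i : ι} {A : Finset (ι → ℤ)} (hA : ∀ x ∈ A, ∀ l, 0 ≤ x l) :
    ∀ x ∈ compress i A, ∀ l, 0 ≤ x l := by
  intro x hx l
  rw [mem_compress] at hx
  rcases hx with ⟨hxA, _⟩ | ⟨w, hw, rfl⟩
  · exact hA x hxA l
  · rcases eq_or_ne l i with rfl | hl
    · simp
    · rw [Function.update_of_ne hl]
      exact hA w (bottomLayer_subset i A hw) l

lemma pos_mem_compress {i : ι} {A : Finset (ι → ℤ)} {x : ι → ℤ}
    (hx : x ∈ compress i A) (hpos : ∀ l, 0 < x l) : x ∈ A := by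
  rw [mem_compress] at hx
  rcases hx with ⟨hxA, _⟩ | ⟨w, hw, rfl⟩
  · exact hxA
  · have := hpos i
    simp at this

lemma update_self_mem_compress {i : ι} {A : Finset (ι → ℤ)} :
    ∀ x ∈ compress i A, Function.update x i 0 ∈ compress i A := by
  intro x hx
  rw [mem_compress] at hx
  rcases hx with ⟨hxA, _⟩ | ⟨w, hw, rfl⟩
  · exact update_mem_compress hxA
  · rw [Function.update_idem]
    rw [mem_compress]
    exact Or.inr ⟨w, hw, rfl⟩

lemma update_other_mem_compress {i j : ι} (hij : i ≠ j) {A : Finset (ι → ℤ)}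
    (hP : ∀ x ∈ A, Function.update x i 0 ∈ A) :
    ∀ x ∈ compress j A, Function.update x i 0 ∈ compress j A := by
  intro x hx
  rw [mem_compress] at hx
  rcases hx with ⟨hxA, hxB⟩ | ⟨w, hw, rfl⟩
  · rw [mem_compress]
    left
    refine ⟨hP x hxA, fun hB => ?_⟩
    obtain ⟨y, hy, hagree, hlt⟩ := exists_of_not_bottomLayer hxA hxB
    rw [bottomLayer, Finset.mem_filter] at hB
    have hagree' : ∀ l, l ≠ j → Function.update y i 0 l = Function.update x i 0 l := by
      intro l hl
      rcases eq_or_ne l i with rfl | hli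
      · simp
      · rw [Function.update_of_ne hli, Function.update_of_ne hli]
        exact hagree l hl
    have hle := hB.2 (Function.update y i 0) (hP y hy) hagree'
    rw [Function.update_of_ne (Ne.symm hij), Function.update_of_ne (Ne.symm hij)] at hle
    exact absurd hle (not_le.2 hlt)
  · rw [Function.update_comm (Ne.symm hij)]
    exact update_mem_compress (hP w (bottomLayer_subset j A hw))

lemma bottomLayer_eq_filter {i : ι} {S : Finset (ι → ℤ)}
    (hnn : ∀ x ∈ S, ∀ l, 0 ≤ x l) (hP : ∀ x ∈ S, Function.update x i 0 ∈ S) :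
    bottomLayer i S = S.filter fun x => x i = 0 := by
  ext x
  rw [bottomLayer, Finset.mem_filter, Finset.mem_filter]
  constructor
  · rintro ⟨hxS, hmin⟩
    refine ⟨hxS, le_antisymm ?_ (hnn x hxS i)⟩
    have := hmin (Function.update x i 0) (hP x hxS) (fun l hl => Function.update_of_ne hl 0 x)
    simpa using this
  · rintro ⟨hxS, hx0⟩
    refine ⟨hxS, fun y hy _ => ?_⟩
    rw [hx0]
    exact hnn y hy i

lemma compress_eq_self {i : ι} {S : Finset (ι → ℤ)}
    (hnn : ∀ x ∈ S, ∀ l, 0 ≤ x l) (hP : ∀ x ∈ S, Function.update x i 0 ∈ S) :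
    compress i S = S := by
  have hB := bottomLayer_eq_filter hnn hP
  rw [compress, hB]
  have heq : Set.EqOn (fun x : ι → ℤ => Function.update x i 0) id
      ((S.filter fun x => x i = 0) : Finset (ι → ℤ)) := by
    intro x hx
    rw [Finset.mem_coe, Finset.mem_filter] at hx
    funext l
    rcases eq_or_ne l i with rfl | hl
    · simp [hx.2]
    · simp [Function.update_of_ne hl]
  rw [Finset.image_congr heq, Finset.image_id]
  exact Finset.sdiff_union_of_subset (Finset.filter_subset _ _)

end Aux

section FinAux

variable {n : ℕ}

lemma compressUpTo_succ (A : Finset (Fin n → ℤ)) (k : ℕ) (h : k < n) :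
    compressUpTo A (k + 1) = compress ⟨k, h⟩ (compressUpTo A k) := by
  rw [compressUpTo, dif_pos h]

lemma nonneg_compressUpTo {A : Finset (Fin n → ℤ)} (hpos : ∀ x ∈ A, ∀ i, 0 ≤ x i) :
    ∀ k, ∀ x ∈ compressUpTo A k, ∀ l, 0 ≤ x l := by
  intro k
  induction k with
  | zero => exact hpos
  | succ k ih =>
    rw [compressUpTo]
    split
    · exact nonneg_compress ih
    · exact ih

lemma pos_mem_compressUpTo {A : Finset (Fin n → ℤ)} :
    ∀ k, ∀ x ∈ compressUpTo A k, (∀ l, 0 < x l) → x ∈ A := by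
  intro k
  induction k with
  | zero => exact fun x hx _ => hx
  | succ k ih =>
    rw [compressUpTo]
    split
    · exact fun x hx hp => ih x (pos_mem_compress hx hp) hp
    · exact ih

lemma update_mem_compressUpTo {A : Finset (Fin n → ℤ)} :
    ∀ k, ∀ j : Fin n, (j : ℕ) < k →
      ∀ x ∈ compressUpTo A k, Function.update x j 0 ∈ compressUpTo A k := by
  intro k
  induction k with
  | zero => exact fun j hj => absurd hj (Nat.not_lt_zero _)
  | succ k ih =>
    intro j hj
    rw [compressUpTo]
    split
    · rename_i h
      rcases eq_or_ne j ⟨k, h⟩ with rfl | hne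
      · exact update_self_mem_compress
      · have hjk : (j : ℕ) < k := by
          rcases Nat.lt_succ_iff_lt_or_eq.1 hj with h' | h'
          · exact h'
          · exact absurd (Fin.ext h') hne
        exact update_other_mem_compress hne (ih j hjk)
    · rename_i h
      exact ih j (lt_of_lt_of_le j.2 (Nat.le_of_not_lt h))

lemma exists_dominated {A : Finset (Fin n → ℤ)} :
    ∀ k, ∀ x ∈ compressUpTo A k, ∃ y ∈ A,
      (∀ j : Fin n, (j : ℕ) < k → 0 < x j → y j < x j) ∧
      (∀ j : Fin n, k ≤ (j : ℕ) → y j ≤ x j) := by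
  intro k
  induction k with
  | zero =>
    exact fun x hx => ⟨x, hx, fun j hj => absurd hj (Nat.not_lt_zero _), fun j _ => le_refl _⟩
  | succ k ih =>
    intro x hx
    rw [compressUpTo] at hx
    split at hx
    · rename_i h
      rw [mem_compress] at hx
      rcases hx with ⟨hxS, hxB⟩ | ⟨w, hw, rfl⟩
      · obtain ⟨z, hz, hagree, hlt⟩ := exists_of_not_bottomLayer hxS hxB
        obtain ⟨y, hy, h1, h2⟩ := ih z hz
        refine ⟨y, hy, fun j hj hpj => ?_, fun j hj => ?_⟩
        · rcases Nat.lt_succ_iff_lt_or_eq.1 hj with h' | h'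
          · have hne : j ≠ ⟨k, h⟩ := Fin.ne_of_val_ne (Nat.ne_of_lt h')
            rw [← hagree j hne]
            exact h1 j h' (by rw [hagree j hne]; exact hpj)
          · have hje : j = ⟨k, h⟩ := Fin.ext h'
            calc y j ≤ z j := h2 j (le_of_eq h'.symm)
              _ < x j := by rw [hje]; exact hlt
        · have hne : j ≠ ⟨k, h⟩ := Fin.ne_of_val_ne (show (j : ℕ) ≠ k by omega)
          rw [← hagree j hne]
          exact h2 j (Nat.le_of_succ_le hj)
      · obtain ⟨y, hy, h1, h2⟩ := ih w (bottomLayer_subset _ _ hw)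
        refine ⟨y, hy, fun j hj hpj => ?_, fun j hj => ?_⟩
        · rcases Nat.lt_succ_iff_lt_or_eq.1 hj with h' | h'
          · have hne : j ≠ ⟨k, h⟩ := Fin.ne_of_val_ne (Nat.ne_of_lt h')
            rw [Function.update_of_ne hne] at hpj ⊢
            exact h1 j h' hpj
          · have hje : j = ⟨k, h⟩ := Fin.ext h'
            rw [hje, Function.update_self] at hpj
            exact absurd hpj (lt_irrefl 0)
        · have hne : j ≠ ⟨k, h⟩ := Fin.ne_of_val_ne (show (j : ℕ) ≠ k by omega)
          rw [Function.update_of_ne hne]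
          exact h2 j (Nat.le_of_succ_le hj)
    · rename_i h
      obtain ⟨y, hy, h1, h2⟩ := ih x hx
      refine ⟨y, hy, fun j hj hpj => ?_, fun j hj => ?_⟩
      · exact h1 j (lt_of_lt_of_le j.2 (Nat.le_of_not_lt h)) hpj
      · exact h2 j (Nat.le_of_succ_le hj)

lemma layersRest_succ (A : Finset (Fin n → ℤ)) (k : ℕ) (h : k < n) :
    layersRest A (k + 1) = layersRest A k \ bottomLayer ⟨k, h⟩ (layersRest A k) := by
  rw [layersRest, dif_pos h]

lemma bottomLayer_filter_eq {S : Finset (Fin n → ℤ)} (i : Fin n)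
    (hnn : ∀ x ∈ S, ∀ l, 0 ≤ x l) (hP : ∀ x ∈ S, Function.update x i 0 ∈ S) :
    bottomLayer i (S.filter fun x => ∀ l : Fin n, l < i → x l ≠ 0) =
      S.filter fun x => x i = 0 ∧ ∀ l : Fin n, l < i → x l ≠ 0 := by
  ext x
  simp only [bottomLayer, Finset.mem_filter]
  constructor
  · rintro ⟨⟨hxS, hlt⟩, hmin⟩
    refine ⟨hxS, ?_, hlt⟩
    refine le_antisymm ?_ (hnn x hxS i)
    have hu : Function.update x i 0 ∈ S ∧ ∀ l : Fin n, l < i → Function.update x i 0 l ≠ 0 := by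
      refine ⟨hP x hxS, fun l hl => ?_⟩
      rw [Function.update_of_ne (Fin.ne_of_lt hl)]
      exact hlt l hl
    have := hmin _ hu (fun l hl => Function.update_of_ne hl 0 x)
    simpa using this
  · rintro ⟨hxS, hx0, hlt⟩
    refine ⟨⟨hxS, hlt⟩, fun y hy _ => ?_⟩
    rw [hx0]
    exact hnn y hy.1 i

lemma layersRest_eq_filter {S : Finset (Fin n → ℤ)}
    (hnn : ∀ x ∈ S, ∀ l, 0 ≤ x l)
    (hP : ∀ i : Fin n, ∀ x ∈ S, Function.update x i 0 ∈ S) :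
    ∀ k, k ≤ n → layersRest S k = S.filter fun x => ∀ l : Fin n, (l : ℕ) < k → x l ≠ 0 := by
  intro k
  induction k with
  | zero =>
    intro _
    rw [layersRest]
    exact (Finset.filter_true_of_mem fun x _ l hl => absurd hl (Nat.not_lt_zero _)).symm
  | succ k ih =>
    intro hk
    have h : k < n := hk
    have hconv : (S.filter fun x => ∀ l : Fin n, (l : ℕ) < k → x l ≠ 0)
        = S.filter fun x => ∀ l : Fin n, l < (⟨k, h⟩ : Fin n) → x l ≠ 0 := by
      apply Finset.filter_congr
      intro x _
      exact ⟨fun hh l hl => hh l (Fin.lt_def.mp hl), fun hh l hl => hh l (Fin.lt_def.mpr hl)⟩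
    rw [layersRest_succ S k h, ih (Nat.le_of_succ_le hk), hconv,
      bottomLayer_filter_eq ⟨k, h⟩ hnn (hP ⟨k, h⟩)]
    ext x
    simp only [Finset.mem_sdiff, Finset.mem_filter]
    constructor
    · rintro ⟨⟨hxS, hlt⟩, hnB⟩
      refine ⟨hxS, fun l hl => ?_⟩
      rcases Nat.lt_succ_iff_lt_or_eq.1 hl with h' | h'
      · exact hlt l (by rw [Fin.lt_def]; exact h')
      · have hle : l = ⟨k, h⟩ := Fin.ext h'
        subst hle
        intro h0
        exact hnB ⟨hxS, h0, hlt⟩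
    · rintro ⟨hxS, hlt⟩
      refine ⟨⟨hxS, fun l hl => hlt l (Nat.lt_succ_of_lt (Fin.lt_def.1 hl))⟩, ?_⟩
      rintro ⟨_, h0, _⟩
      exact hlt ⟨k, h⟩ (Nat.lt_succ_self k) h0

end FinAux


/-- If `A ⊆ ℤ_{≥0}^n` is a finite weak antichain, then
`A' = C_n(C_{n-1}(⋯(C_1(A))⋯))` satisfies: (i) `|π_i(A')| ≤ |π_i(A)|` for each `i`;
(ii) `A'` is `k`-compressed for all `k`; (iii) `A'` is layer-decomposable;
(iv) `A'_k = {x ∈ A' : x_k = 0 but x_l ≠ 0 for l < k}` for all `k`; (v) `A' ⊆ X_n`. -/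
theorem compressUpTo_properties (n : ℕ) (A : Finset (Fin n → ℤ))
    (hpos : ∀ x ∈ A, ∀ i, 0 ≤ x i) (hA : IsWeakAntichain A) :
    (∀ i : Fin n, (proj i (compressUpTo A n)).card ≤ (proj i A).card) ∧
    (∀ k : Fin n, compress k (compressUpTo A n) = compressUpTo A n) ∧
    (compressUpTo A n = Finset.univ.biUnion (layer (compressUpTo A n))) ∧
    (∀ k : Fin n, layer (compressUpTo A n) k =
      (compressUpTo A n).filter fun x => x k = 0 ∧ ∀ l : Fin n, l < k → x l ≠ 0) ∧
    (∀ x ∈ compressUpTo A n, ∃ i, x i = 0) := by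
  have hnn : ∀ x ∈ compressUpTo A n, ∀ l, 0 ≤ x l := nonneg_compressUpTo hpos n
  have hP : ∀ j : Fin n, ∀ x ∈ compressUpTo A n, Function.update x j 0 ∈ compressUpTo A n :=
    fun j => update_mem_compressUpTo n j j.2
  have hv : ∀ x ∈ compressUpTo A n, ∃ i, x i = 0 := by
    intro x hx
    by_contra hzero
    push_neg at hzero
    have hposx : ∀ l, 0 < x l := fun l => lt_of_le_of_ne (hnn x hx l) (Ne.symm (hzero l))
    obtain ⟨y, hy, h1, _⟩ := exists_dominated n x hx
    have hxA : x ∈ A := pos_mem_compressUpTo n x hx hposx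
    exact hA y hy x hxA fun j => h1 j j.2 (hposx j)
  have hii : ∀ k : Fin n, compress k (compressUpTo A n) = compressUpTo A n :=
    fun k => compress_eq_self hnn (hP k)
  have hiv : ∀ k : Fin n, layer (compressUpTo A n) k =
      (compressUpTo A n).filter fun x => x k = 0 ∧ ∀ l : Fin n, l < k → x l ≠ 0 := by
    intro k
    have hconv : ((compressUpTo A n).filter fun x => ∀ l : Fin n, (l : ℕ) < (k : ℕ) → x l ≠ 0)
        = (compressUpTo A n).filter fun x => ∀ l : Fin n, l < k → x l ≠ 0 := by
      apply Finset.filter_congr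
      intro x _
      exact ⟨fun hh l hl => hh l (Fin.lt_def.mp hl), fun hh l hl => hh l (Fin.lt_def.mpr hl)⟩
    rw [layer, layersRest_eq_filter hnn hP k.1 (le_of_lt k.2), hconv]
    exact bottomLayer_filter_eq k hnn (hP k)
  have hiii : compressUpTo A n = Finset.univ.biUnion (layer (compressUpTo A n)) := by
    ext x
    simp only [Finset.mem_biUnion, Finset.mem_univ, true_and]
    constructor
    · intro hx
      obtain ⟨i0, hi0⟩ := hv x hx
      have hne : (Finset.univ.filter fun l : Fin n => x l = 0).Nonempty :=
        ⟨i0, Finset.mem_filter.2 ⟨Finset.mem_univ _, hi0⟩⟩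
      refine ⟨(Finset.univ.filter fun l : Fin n => x l = 0).min' hne, ?_⟩
      rw [hiv]
      refine Finset.mem_filter.2 ⟨hx, ?_, fun l hl h0 => ?_⟩
      · have := Finset.min'_mem _ hne
        simpa using this
      · have hle := Finset.min'_le (Finset.univ.filter fun l : Fin n => x l = 0) l
          (Finset.mem_filter.2 ⟨Finset.mem_univ _, h0⟩)
        exact absurd hl (not_lt.2 hle)
    · rintro ⟨i, hi⟩
      rw [hiv] at hi
      exact (Finset.mem_filter.1 hi).1
  have hi : ∀ i : Fin n, (proj i (compressUpTo A n)).card ≤ (proj i A).card := by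
    intro i
    have key : ∀ k, (proj i (compressUpTo A k)).card ≤ (proj i A).card := by
      intro k
      induction k with
      | zero => exact le_refl _
      | succ k ih =>
        rw [compressUpTo]
        split
        · exact le_trans (proj_compress_card_le i _ _) ih
        · exact ih
    exact key n
  exact ⟨hi, hii, hiii, hiv, hv⟩

end ProjWA
end

section
/- If A ⊆ X_n is finite, then for every i and every j the complete i-compression does not increase the j-th projection: |π_j(𝒞_i(A))| ≤ |π_j(A)|. Moreover, for j ≠ i one has π_j(𝒞_i(A)) ⊆ 𝒞_i(π_j(A)). -/
namespace ProjWA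

variable {ι : Type*}

section Aux

variable [Fintype ι] [DecidableEq ι]

lemma projFun_update_same (i : ι) (x : ι → ℤ) (a : ℤ) :
    projFun i (Function.update x i a) = projFun i x := by
  funext j
  simp [projFun, Function.update_of_ne j.2]

lemma mem_ccompress {i : ι} {A : Finset (ι → ℤ)} {z : ι → ℤ} :
    z ∈ ccompress i A ↔ ∃ x ∈ A, ∃ a : ℕ,
      a < (A.filter fun y => ∀ j, j ≠ i → y j = x j).card ∧
      z = Function.update x i (a : ℤ) := by
  simp only [ccompress, Finset.mem_biUnion, Finset.mem_image, Finset.mem_range]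
  constructor
  · rintro ⟨x, hx, a, ha, rfl⟩; exact ⟨x, hx, a, ha, rfl⟩
  · rintro ⟨x, hx, a, ha, rfl⟩; exact ⟨x, hx, a, ha, rfl⟩

lemma line_filter_eq {i : ι} {x : ι → ℤ} (A : Finset (ι → ℤ)) :
    (A.filter fun y => ∀ j, j ≠ i → y j = x j)
      = A.filter fun y => projFun i y = projFun i x := by
  apply Finset.filter_congr
  intro y _
  constructor
  · intro h; funext j; exact h j.1 j.2
  · intro h j hj; exact congrFun h ⟨j, hj⟩

lemma update_eq_of_projFun_eq {i : ι} {x x' : ι → ℤ}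
    (h : projFun i x = projFun i x') (a : ℤ) :
    Function.update x i a = Function.update x' i a := by
  funext k
  by_cases hk : k = i
  · subst hk; simp
  · rw [Function.update_of_ne hk, Function.update_of_ne hk]
    exact congrFun h ⟨k, hk⟩

lemma fiber_card (i : ι) (A : Finset (ι → ℤ)) {p : {j : ι // j ≠ i} → ℤ}
    (hp : p ∈ proj i A) :
    ((ccompress i A).filter fun z => projFun i z = p).card
      = (A.filter fun y => projFun i y = p).card := by
  obtain ⟨x0, hx0, rfl⟩ := Finset.mem_image.mp hp
  set N := (A.filter fun y => projFun i y = projFun i x0).card with hN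
  have hset : ((ccompress i A).filter fun z => projFun i z = projFun i x0)
      = (Finset.range N).image fun a : ℕ => Function.update x0 i (a : ℤ) := by
    ext z
    simp only [Finset.mem_filter, Finset.mem_image, Finset.mem_range]
    constructor
    · rintro ⟨hz, hpz⟩
      obtain ⟨x, hx, a, ha, rfl⟩ := mem_ccompress.mp hz
      rw [projFun_update_same] at hpz
      rw [line_filter_eq, hpz] at ha
      exact ⟨a, ha, (update_eq_of_projFun_eq hpz _).symm⟩
    · rintro ⟨a, ha, rfl⟩
      refine ⟨mem_ccompress.mpr ⟨x0, hx0, a, ?_, rfl⟩, projFun_update_same _ _ _⟩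
      rw [line_filter_eq]; exact ha
  rw [hset, Finset.card_image_of_injective _ ?_, Finset.card_range]
  intro a b hab
  have h := congrFun hab i
  simp only [Function.update_self] at h
  exact_mod_cast h

lemma card_ccompress (i : ι) (A : Finset (ι → ℤ)) :
    (ccompress i A).card = A.card := by
  have h1 : ∀ z ∈ ccompress i A, projFun i z ∈ proj i A := by
    intro z hz
    obtain ⟨x, hx, a, ha, rfl⟩ := mem_ccompress.mp hz
    rw [projFun_update_same]
    exact Finset.mem_image_of_mem _ hx
  rw [Finset.card_eq_sum_card_fiberwise h1,
      Finset.card_eq_sum_card_fiberwise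
        (fun x (hx : x ∈ A) => Finset.mem_image_of_mem (projFun i) hx)]
  exact Finset.sum_congr rfl fun p hp => fiber_card i A hp

end Aux

lemma projFun_update_ne {n : ℕ} (i j : Fin n) (hij : i ≠ j) (x : Fin n → ℤ) (a : ℤ) :
    projFun j (Function.update x i a)
      = Function.update (projFun j x) (⟨i, hij⟩ : {k : Fin n // k ≠ j}) a := by
  funext k
  by_cases hk : k = (⟨i, hij⟩ : {k : Fin n // k ≠ j})
  · subst hk; simp [projFun]
  · have hk1 : k.1 ≠ i := fun h => hk (Subtype.ext h)
    show Function.update x i a k.1 = _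
    rw [Function.update_of_ne hk1, Function.update_of_ne hk]
    rfl

lemma line_card_le {n : ℕ} (A : Finset (Fin n → ℤ)) (i j : Fin n) (hij : i ≠ j)
    (x : Fin n → ℤ) :
    (A.filter fun y => ∀ k, k ≠ i → y k = x k).card
      ≤ ((proj j A).filter fun y' => ∀ k' : {k : Fin n // k ≠ j},
          k' ≠ (⟨i, hij⟩ : {k : Fin n // k ≠ j}) → y' k' = projFun j x k').card := by
  apply Finset.card_le_card_of_injOn (projFun j)
  · intro y hy
    rw [Finset.mem_coe, Finset.mem_filter] at hy
    rw [Finset.mem_coe, Finset.mem_filter]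
    refine ⟨Finset.mem_image_of_mem _ hy.1, ?_⟩
    intro k' hk'
    have hk1 : k'.1 ≠ i := fun h => hk' (Subtype.ext h)
    exact hy.2 k'.1 hk1
  · intro y hy y' hy' h
    rw [Finset.mem_coe, Finset.mem_filter] at hy hy'
    funext k
    by_cases hk : k = i
    · subst hk
      exact congrFun h ⟨k, hij⟩
    · rw [hy.2 k hk, hy'.2 k hk]

/-- If `A ⊆ X_n` is finite then for every `i` and every `j` the complete
`i`-compression does not increase the `j`-th projection, `|π_j(𝒞_i(A))| ≤ |π_j(A)|`;
moreover for `j ≠ i` one has `π_j(𝒞_i(A)) ⊆ 𝒞_i(π_j(A))`. -/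
theorem proj_ccompress (n : ℕ) (A : Finset (Fin n → ℤ)) (hA : ↑A ⊆ XSet (Fin n))
    (i : Fin n) :
    (∀ j : Fin n, (proj j (ccompress i A)).card ≤ (proj j A).card) ∧
      ∀ (j : Fin n) (hij : i ≠ j),
        proj j (ccompress i A) ⊆ ccompress (⟨i, hij⟩ : {k : Fin n // k ≠ j}) (proj j A) := by
  have hb : ∀ (j : Fin n) (hij : i ≠ j),
      proj j (ccompress i A) ⊆ ccompress (⟨i, hij⟩ : {k : Fin n // k ≠ j}) (proj j A) := by
    intro j hij z' hz'
    obtain ⟨z, hz, rfl⟩ := Finset.mem_image.mp hz'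
    obtain ⟨x, hx, a, ha, rfl⟩ := mem_ccompress.mp hz
    rw [projFun_update_ne i j hij]
    refine mem_ccompress.mpr ⟨projFun j x, Finset.mem_image_of_mem _ hx, a,
      lt_of_lt_of_le ha ?_, rfl⟩
    convert line_card_le A i j hij x using 3
    rfl
  refine ⟨?_, hb⟩
  intro j
  by_cases hij : i = j
  · subst hij
    apply Finset.card_le_card
    intro p hp
    obtain ⟨z, hz, rfl⟩ := Finset.mem_image.mp hp
    obtain ⟨x, hx, a, ha, rfl⟩ := mem_ccompress.mp hz
    rw [projFun_update_same]
    exact Finset.mem_image_of_mem _ hx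
  · calc (proj j (ccompress i A)).card
        ≤ (ccompress (⟨i, hij⟩ : {k : Fin n // k ≠ j}) (proj j A)).card :=
          Finset.card_le_card (hb j hij)
      _ = (proj j A).card := card_ccompress _ _

end ProjWA
end

section
/- Suppose n ≥ 3 and A ⊆ X_n is a finite down-set with 𝒞𝒞_i(A) = A for all i. If x < y in the balanced order, x ∉ A and y ∈ A, then: (i) x has exactly one coordinate equal to zero; (ii) if x_j = y_j for some j, then x_j = y_j = 0 and y has at least one other coordinate equal to zero. -/
namespace ProjWA

variable {ι : Type*}

lemma withbot_map_lt_map_iff {α β : Type*} [LinearOrder α] [LinearOrder β] {f : α → β}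
    (hf : StrictMono f) (p q : WithBot α) : p.map f < q.map f ↔ p < q := by
  cases p <;> cases q <;>
    simp [WithBot.map_bot, WithBot.map_coe, WithBot.bot_lt_coe, WithBot.coe_lt_coe, hf.lt_iff_lt]

lemma max_image_strictMono {α β : Type*} [LinearOrder α] [LinearOrder β] [DecidableEq β]
    {f : α → β} (hf : StrictMono f) (s : Finset α) :
    (s.image f).max = s.max.map f := by
  cases ht : s.max with
  | bot =>
    rw [Finset.max_eq_bot] at ht
    subst ht; simp
  | coe c =>
    have hc : c ∈ s := Finset.mem_of_max ht
    rw [WithBot.map_coe]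
    apply le_antisymm
    · apply Finset.max_le
      intro b hb
      obtain ⟨a, ha, rfl⟩ := Finset.mem_image.mp hb
      exact_mod_cast hf.monotone (WithBot.coe_le_coe.mp (ht ▸ Finset.le_max ha))
    · exact Finset.le_max (Finset.mem_image_of_mem f hc)

lemma mem_diffSet [Fintype ι] {x y : ι → ℤ} {j : ι} :
    j ∈ diffSet x y ↔ x j ≠ y j := by simp [diffSet]

lemma le_maxOn {s : Finset ι} {x : ι → ℤ} {j : ι} (hj : j ∈ s) :
    (x j : WithBot ℤ) ≤ maxOn s x :=
  Finset.le_max (Finset.mem_image_of_mem x hj)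

lemma maxOn_le {s : Finset ι} {x : ι → ℤ} {M : WithBot ℤ}
    (h : ∀ j ∈ s, (x j : WithBot ℤ) ≤ M) : maxOn s x ≤ M := by
  apply Finset.max_le
  intro b hb
  obtain ⟨j, hj, rfl⟩ := Finset.mem_image.mp hb
  exact h j hj

lemma maxOn_mono {s t : Finset ι} {x : ι → ℤ} (h : s ⊆ t) : maxOn s x ≤ maxOn t x :=
  Finset.max_mono (Finset.image_subset_image h)

section Transfer
variable [Fintype ι] [LinearOrder ι] [DecidableEq ι]

lemma image_diffSet_projFun (i : ι) (x y z : ι → ℤ) (hi : x i = y i) :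
    (diffSet (projFun i x) (projFun i y)).image (projFun i z) = (diffSet x y).image z := by
  ext v
  simp only [Finset.mem_image, diffSet, Finset.mem_filter, Finset.mem_univ, true_and, projFun]
  constructor
  · rintro ⟨⟨j, hj⟩, h1, h2⟩
    exact ⟨j, (Finset.mem_filter.mp h1).2, h2⟩
  · rintro ⟨j, h1, h2⟩
    have hj : j ≠ i := fun h => h1 (h ▸ hi)
    exact ⟨⟨j, hj⟩, Finset.mem_filter.mpr ⟨Finset.mem_univ _, h1⟩, h2⟩

lemma maxOn_diffSet_projFun (i : ι) (x y z : ι → ℤ) (hi : x i = y i) :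
    maxOn (diffSet (projFun i x) (projFun i y)) (projFun i z) = maxOn (diffSet x y) z := by
  unfold maxOn
  rw [image_diffSet_projFun i x y z hi]

lemma argmax_filter_image (i : ι) (x y z : ι → ℤ) (hi : x i = y i) (M : WithBot ℤ) :
    (((diffSet (projFun i x) (projFun i y)).filter
        fun j => ((projFun i z j : WithBot ℤ) = M)).image Subtype.val)
      = (diffSet x y).filter fun j => ((z j : WithBot ℤ) = M) := by
  ext j
  simp only [Finset.mem_image, Finset.mem_filter, diffSet, Finset.mem_univ, true_and, projFun]
  constructor
  · rintro ⟨⟨j', hj'⟩, h12, rfl⟩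
    have h := Finset.mem_filter.mp h12
    exact ⟨(Finset.mem_filter.mp h.1).2, h.2⟩
  · rintro ⟨h1, h2⟩
    have hj : j ≠ i := fun h => h1 (h ▸ hi)
    exact ⟨⟨j, hj⟩, Finset.mem_filter.mpr ⟨Finset.mem_filter.mpr ⟨Finset.mem_univ _, h1⟩, h2⟩, rfl⟩

lemma argmaxOn_map (i : ι) (x y z : ι → ℤ) (hi : x i = y i) :
    (argmaxOn (diffSet (projFun i x) (projFun i y)) (projFun i z)).map Subtype.val
      = argmaxOn (diffSet x y) z := by
  unfold argmaxOn
  rw [← max_image_strictMono (Subtype.strictMono_coe _), argmax_filter_image i x y z hi,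
    maxOn_diffSet_projFun i x y z hi]

lemma balancedLT_projFun (i : ι) (x y : ι → ℤ) (hi : x i = y i) (h : balancedLT x y) :
    balancedLT (projFun i x) (projFun i y) := by
  obtain ⟨hne, h⟩ := h
  constructor
  · intro he
    apply hne
    funext j
    by_cases hj : j = i
    · rw [hj, hi]
    · exact congrFun he ⟨j, hj⟩
  · rw [maxOn_diffSet_projFun i x y x hi, maxOn_diffSet_projFun i x y y hi]
    rcases h with h | ⟨h1, h2⟩
    · exact Or.inl h
    · refine Or.inr ⟨h1, ?_⟩
      rw [← withbot_map_lt_map_iff (Subtype.strictMono_coe _), argmaxOn_map i x y x hi,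
        argmaxOn_map i x y y hi]
      exact h2

end Transfer
set_option linter.unusedSectionVars false

section Membership
variable [Fintype ι] [LinearOrder ι] [DecidableEq ι]

lemma eq_of_projFun_eq {i : ι} {x z : ι → ℤ} (h : projFun i z = projFun i x)
    (hi : z i = x i) : z = x := by
  funext j
  by_cases hj : j = i
  · rw [hj, hi]
  · exact congrFun h ⟨j, hj⟩

lemma insertAt_zero_projFun {i : ι} {x : ι → ℤ} (hi : x i = 0) :
    insertAt i 0 (projFun i x) = x := by
  funext j
  by_cases hj : j = i
  · rw [hj, insertAt]; simp [hi]
  · simp [insertAt, hj, projFun]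

lemma mem_of_common {i : ι} {A : Finset (ι → ℤ)} {x y : ι → ℤ}
    (hL : IsInitSeg (Lset i (x i) A))
    (hxnn : ∀ j, 0 ≤ x j) (hyA : y ∈ A) (h : balancedLT x y)
    (hi : x i = y i) (hx' : ∃ j, j ≠ i ∧ x j = 0) (hy' : ∃ j, j ≠ i ∧ y j = 0) :
    x ∈ A := by
  obtain ⟨jx, hjx, hjx0⟩ := hx'
  obtain ⟨jy, hjy, hjy0⟩ := hy'
  have hymem : projFun i y ∈ Lset i (x i) A := by
    rw [Lset, Finset.mem_filter]
    exact ⟨Finset.mem_image_of_mem _ (Finset.mem_filter.mpr ⟨hyA, hi.symm⟩), ⟨jy, hjy⟩, hjy0⟩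
  have hxX : projFun i x ∈ XSet {j : ι // j ≠ i} :=
    ⟨fun j => hxnn j.1, ⟨jx, hjx⟩, hjx0⟩
  have hxmem : projFun i x ∈ Lset i (x i) A :=
    hL.2 _ hymem _ hxX (balancedLT_projFun i x y hi h)
  rw [Lset, Finset.mem_filter, proj, Finset.mem_image] at hxmem
  obtain ⟨⟨z, hz, hzp⟩, -⟩ := hxmem
  rw [Finset.mem_filter] at hz
  exact (eq_of_projFun_eq hzp hz.2) ▸ hz.1

lemma mem_of_common_K {i : ι} {A : Finset (ι → ℤ)} {x y : ι → ℤ}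
    (hK : IsKInitSeg i (Kset i A))
    (hxi : x i = 0) (hyi : y i = 0) (hxpos : ∀ j, j ≠ i → 0 < x j)
    (hypos : ∀ j, j ≠ i → 0 < y j) (hyA : y ∈ A) (h : balancedLT x y) :
    x ∈ A := by
  have hymem : projFun i y ∈ Kset i A := by
    rw [Kset, Finset.mem_filter]
    exact ⟨Finset.mem_image_of_mem _ (Finset.mem_filter.mpr ⟨hyA, hyi⟩),
      fun j => hypos j.1 j.2⟩
  have hxmem : projFun i x ∈ Kset i A := by
    apply hK.2 _ hymem _ (fun j => hxpos j.1 j.2)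
    have e : ∀ (d : DecidableEq ι) (z : ι → ℤ), z i = 0 →
        @insertAt ι d i 0 (fun j => z j.1) = z := by
      intro d z hz
      funext j
      by_cases hj : j = i
      · subst hj; simp [insertAt, hz]
      · simp [insertAt, hj]
    have ep : projFun i y = fun j => y j.1 := rfl
    rw [e _ x hxi, ep, e _ y hyi]
    exact h
  rw [Kset, Finset.mem_filter, proj, Finset.mem_image] at hxmem
  obtain ⟨⟨z, hz, hzp⟩, -⟩ := hxmem
  rw [Finset.mem_filter] at hz
  exact (eq_of_projFun_eq hzp (hz.2.trans hxi.symm)) ▸ hz.1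

end Membership
section Construct
variable [Fintype ι] [LinearOrder ι]

lemma construct_aux {x y : ι → ℤ} {m : ι}
    (hxnn : ∀ j, 0 ≤ x j) (hynn : ∀ j, 0 ≤ y j)
    (hcom : ∀ j, x j = y j → x j = 0) (hmT : m ∈ diffSet x y) :
    ∀ w : ι → ℤ, w = (fun j => if j = m then y m else 0) →
      (∀ j, 0 ≤ w j) ∧ (∀ j, w j ≤ y j) ∧ (∀ j, j ≠ m → w j = 0) ∧ w m = y m ∧ x ≠ w ∧
        diffSet x w ⊆ diffSet x y ∧ m ∈ diffSet x w ∧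
        maxOn (diffSet x w) w = ((y m : ℤ) : WithBot ℤ) := by
  rintro w rfl
  have hxm : x m ≠ y m := mem_diffSet.mp hmT
  have hw0 : ∀ j, j ≠ m → (if j = m then y m else 0) = (0 : ℤ) := by
    intro j hj; simp [hj]
  have hwm : (if m = m then y m else 0) = y m := by simp
  have hnn : ∀ j, (0:ℤ) ≤ if j = m then y m else 0 := by
    intro j; by_cases hj : j = m <;> simp [hj, hynn m]
  have hle : ∀ j, (if j = m then y m else 0) ≤ y j := by
    intro j; by_cases hj : j = m <;> simp [hj, hynn j]
  have hsub : diffSet x (fun j => if j = m then y m else 0) ⊆ diffSet x y := by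
    intro j hj
    rw [mem_diffSet] at hj ⊢
    intro hxy
    have hjm : j ≠ m := by
      rintro rfl; exact hxm hxy
    apply hj
    simp only [hjm, if_false]
    exact hcom j hxy
  have hmT2 : m ∈ diffSet x (fun j => if j = m then y m else 0) := by
    rw [mem_diffSet]; simpa using hxm
  refine ⟨hnn, hle, fun j hj => hw0 j hj, hwm, ?_, hsub, hmT2, ?_⟩
  · intro he
    apply hxm
    have := congrFun he m
    simpa using this
  · apply le_antisymm
    · apply maxOn_le
      intro j hj
      by_cases hjm : j = m
      · simp [hjm]
      · simp only [hjm, if_false]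
        exact_mod_cast hynn m
    · have := le_maxOn (x := fun j => if j = m then y m else 0) hmT2
      simpa using this

lemma exists_dominator {x y : ι → ℤ}
    (hxnn : ∀ j, 0 ≤ x j) (hynn : ∀ j, 0 ≤ y j) (hxy : balancedLT x y)
    (hcom : ∀ j, x j = y j → x j = 0) :
    ∃ m : ι, ∃ w : ι → ℤ, (∀ j, 0 ≤ w j) ∧ (∀ j, w j ≤ y j) ∧ balancedLT x w ∧
      (∀ j, j ≠ m → w j = 0) := by
  obtain ⟨hne, hcase⟩ := hxy
  rcases hcase with hlt | ⟨heq, harg⟩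
  · -- strict max case
    have hTne : (diffSet x y).Nonempty := by
      obtain ⟨j, hj⟩ := Function.ne_iff.mp hne
      exact ⟨j, mem_diffSet.mpr hj⟩
    obtain ⟨Mv, hMv⟩ := Finset.max_of_nonempty (hTne.image y)
    obtain ⟨m, hmT, hym⟩ := Finset.mem_image.mp (Finset.mem_of_max hMv)
    have hmax : maxOn (diffSet x y) y = ((y m : ℤ) : WithBot ℤ) := by
      rw [maxOn, hMv, hym]
    obtain ⟨h1, h2, h3, h4, h5, h6, h7, h8⟩ :=
      construct_aux hxnn hynn hcom hmT (fun j => if j = m then y m else 0) rfl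
    refine ⟨m, _, h1, h2, ⟨h5, Or.inl ?_⟩, h3⟩
    calc maxOn (diffSet x (fun j => if j = m then y m else 0)) x
        ≤ maxOn (diffSet x y) x := maxOn_mono h6
      _ < maxOn (diffSet x y) y := hlt
      _ = _ := hmax.trans h8.symm
  · -- equal max, argmax case
    cases h' : argmaxOn (diffSet x y) y with
    | bot => rw [h'] at harg; exact absurd harg (by simp)
    | coe m =>
      rw [argmaxOn] at h'
      have hmF := Finset.mem_of_max h'
      rw [Finset.mem_filter] at hmF
      obtain ⟨hmT, hymax⟩ := hmF
      have hmax : maxOn (diffSet x y) y = ((y m : ℤ) : WithBot ℤ) := hymax.symm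
      have hMvpos : 0 < y m := by
        rcases lt_or_eq_of_le (hynn m) with h | h
        · exact h
        · exfalso
          have hxle : ((x m : ℤ) : WithBot ℤ) ≤ maxOn (diffSet x y) x := le_maxOn hmT
          rw [heq, hmax, ← h] at hxle
          have : x m ≤ 0 := by exact_mod_cast hxle
          exact (mem_diffSet.mp hmT) ((le_antisymm this (hxnn m)).trans h)
      obtain ⟨h1, h2, h3, h4, h5, h6, h7, h8⟩ :=
        construct_aux hxnn hynn hcom hmT (fun j => if j = m then y m else 0) rfl
      refine ⟨m, _, h1, h2, ⟨h5, ?_⟩, h3⟩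
      have h2le : maxOn (diffSet x (fun j => if j = m then y m else 0)) x
          ≤ ((y m : ℤ) : WithBot ℤ) := (maxOn_mono h6).trans (le_of_eq (heq.trans hmax))
      rcases lt_or_eq_of_le h2le with h2lt | h2eq
      · exact Or.inl (h2lt.trans_eq h8.symm)
      · refine Or.inr ⟨h2eq.trans h8.symm, ?_⟩
        have hfilter : (diffSet x (fun j => if j = m then y m else 0)).filter
            (fun j => (((if j = m then y m else 0 : ℤ)) : WithBot ℤ)
              = maxOn (diffSet x (fun j => if j = m then y m else 0))
                  (fun j => if j = m then y m else 0)) = {m} := by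
          ext j
          simp only [Finset.mem_filter, Finset.mem_singleton]
          constructor
          · rintro ⟨hj1, hj2⟩
            by_contra hjm
            rw [if_neg hjm, h8] at hj2
            exact (ne_of_lt hMvpos) (WithBot.coe_inj.mp hj2)
          · rintro rfl
            exact ⟨h7, by rw [if_pos rfl, h8]⟩
        have hargw : argmaxOn (diffSet x (fun j => if j = m then y m else 0))
            (fun j => if j = m then y m else 0) = (m : WithBot ι) := by
          rw [argmaxOn, hfilter, Finset.max_singleton]
        rw [hargw]
        have hle2 : argmaxOn (diffSet x (fun j => if j = m then y m else 0)) x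
            ≤ argmaxOn (diffSet x y) x := by
          rw [argmaxOn, argmaxOn]
          apply Finset.max_le
          intro j hj
          rw [Finset.mem_filter] at hj
          obtain ⟨hjT2, hjx⟩ := hj
          apply Finset.le_max
          rw [Finset.mem_filter]
          exact ⟨h6 hjT2, by rw [hjx, h2eq, ← hmax, ← heq]⟩
        calc argmaxOn (diffSet x (fun j => if j = m then y m else 0)) x
            ≤ argmaxOn (diffSet x y) x := hle2
          _ < (m : WithBot ι) := by rw [← argmaxOn] at h'; rw [← h']; exact harg

end Construct
/-- Suppose `n ≥ 3` and `A ⊆ X_n` is a finite down-set fixed by all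
balanced compressions (i.e. each `L^i_a(A)` is an initial segment of the balanced order and
each `K^i(A)` is `≺`-initial). If `x < y` in the balanced order with `x ∉ A` and `y ∈ A`,
then: (i) `x` has exactly one zero coordinate; (ii) if `x_j = y_j` for some `j` then
`x_j = y_j = 0` and `y` has at least one other zero coordinate. -/
theorem balanced_compressed_structure (n : ℕ) (hn : 3 ≤ n)
    (A : Finset (Fin n → ℤ)) (hAX : ↑A ⊆ XSet (Fin n)) (hAdown : IsDownSet A)
    (hfixed : ∀ i : Fin n,
      (∀ a : ℤ, 0 ≤ a → IsInitSeg (Lset i a A)) ∧ IsKInitSeg i (Kset i A))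
    (x y : Fin n → ℤ) (hx : x ∈ XSet (Fin n)) (hy : y ∈ A)
    (hxy : balancedLT x y) (hxA : x ∉ A) :
    (∃! j : Fin n, x j = 0) ∧
      ∀ j : Fin n, x j = y j → x j = 0 ∧ y j = 0 ∧ ∃ k : Fin n, k ≠ j ∧ y k = 0 := by
  have hyX : y ∈ XSet (Fin n) := hAX hy
  have hxnn := hx.1
  have hynn := hyX.1
  have hcom : ∀ j, x j = y j → x j = 0 := by
    intro j hj
    by_contra h0
    apply hxA
    apply mem_of_common ((hfixed j).1 (x j) (hxnn j)) hxnn hy hxy hj ?_ ?_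
    · obtain ⟨k, hk⟩ := hx.2
      exact ⟨k, fun he => h0 (he ▸ hk), hk⟩
    · obtain ⟨k, hk⟩ := hyX.2
      refine ⟨k, ?_, hk⟩
      rintro rfl
      exact h0 (hj.trans hk)
  have huniq : ∀ k l : Fin n, x k = 0 → x l = 0 → k = l := by
    intro k l hk hl
    by_contra hkl
    apply hxA
    obtain ⟨m, w, hwnn, hwle, hxw, hw0⟩ := exists_dominator hxnn hynn hxy hcom
    have hwA : w ∈ A := hAdown w y hwnn hwle hy
    obtain ⟨i, o, hi0, ho0, him, hoi⟩ :
        ∃ i o : Fin n, x i = 0 ∧ x o = 0 ∧ i ≠ m ∧ o ≠ i := by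
      by_cases hkm : k = m
      · exact ⟨l, k, hl, hk, fun h => hkl (hkm.trans h.symm), hkl⟩
      · exact ⟨k, l, hk, hl, hkm, fun h => hkl h.symm⟩
    obtain ⟨j₀, hj₀i, hj₀m⟩ : ∃ j₀ : Fin n, j₀ ≠ i ∧ j₀ ≠ m := by
      have hcard : ¬ (Finset.univ : Finset (Fin n)) ⊆ {i, m} := by
        intro hsub
        have h1 := Finset.card_le_card hsub
        have h2 : ({i, m} : Finset (Fin n)).card ≤ 2 := by
          apply le_trans (Finset.card_insert_le _ _)
          simp
        rw [Finset.card_univ, Fintype.card_fin] at h1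
        omega
      rw [Finset.not_subset] at hcard
      obtain ⟨j₀, -, hj₀⟩ := hcard
      simp only [Finset.mem_insert, Finset.mem_singleton, not_or] at hj₀
      exact ⟨j₀, hj₀.1, hj₀.2⟩
    have hwi : w i = 0 := hw0 i him
    have hixw : x i = w i := by rw [hi0, hwi]
    exact mem_of_common ((hfixed i).1 (x i) (hxnn i)) hxnn hwA hxw hixw
      ⟨o, hoi, ho0⟩ ⟨j₀, hj₀i, hw0 j₀ hj₀m⟩
  constructor
  · obtain ⟨k, hk⟩ := hx.2
    exact ⟨k, hk, fun j hj => huniq j k hj hk⟩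
  · intro j hj
    have hxj : x j = 0 := hcom j hj
    have hyj : y j = 0 := hj ▸ hxj
    refine ⟨hxj, hyj, ?_⟩
    by_contra hno
    push_neg at hno
    apply hxA
    apply mem_of_common_K (hfixed j).2 hxj hyj ?_ ?_ hy hxy
    · intro k hk
      rcases lt_or_eq_of_le (hxnn k) with h | h
      · exact h
      · exact absurd (huniq k j h.symm hxj) hk
    · intro k hk
      rcases lt_or_eq_of_le (hynn k) with h | h
      · exact h
      · exact absurd h.symm (hno k hk)

end ProjWA
end
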